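/- The continuous q-Hermite polynomials satisfy H_n(cos θ | q) = Σ_{k=0}^n [n choose k]_q e^{i(n-2k)θ}, where H_n(x|q) is defined by the recurrence H_{n+1}(x|q) = 2x H_n(x|q) - (1-q^n) H_{n-1}(x|q), H_0 = 1, H_1 = 2x. -/

import Mathlib

open Finset

/-- The q-analogue `[n]_q = (1-q^n)/(1-q)`. -/
noncomputable def qNum {F : Type*} [Field F] (q : F) (n : ℕ) : F := (1 - q ^ n) / (1 - q)

/-- The q-factorial `[n]_q! = [1]_q [2]_q ⋯ [n]_q`. -/
noncomputable def qFact {F : Type*} [Field F] (q : F) (n : ℕ) : F :=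
  ∏ j ∈ Finset.Icc 1 n, qNum q j

/-- The q-binomial (Gaussian) coefficient `[n choose k]_q = [n]_q!/([k]_q! [n-k]_q!)`,
zero when `k > n`. -/
noncomputable def qBinom {F : Type*} [Field F] (q : F) (n k : ℕ) : F :=
  if k ≤ n then qFact q n / (qFact q k * qFact q (n - k)) else 0

/-- The continuous q-Hermite polynomials as functions of `x`:
`H_0 = 1`, `H_1 = 2x`, `H_{n+1} = 2x H_n - (1-qⁿ) H_{n-1}`. -/
noncomputable def contQHermite (q : ℝ) : ℕ → ℝ → ℝ
  | 0 => fun _ => 1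
  | 1 => fun x => 2 * x
  | (n + 2) => fun x =>
      2 * x * contQHermite q (n + 1) x - (1 - q ^ (n + 1)) * contQHermite q n x

section Aux
variable {F : Type*} [Field F]

lemma qNum_ne_zero (q : F) (hq : ∀ j : ℕ, 1 ≤ j → q ^ j ≠ 1) {j : ℕ} (hj : 1 ≤ j) :
    qNum q j ≠ 0 := by
  have h1 : q ≠ 1 := fun h => hq 1 le_rfl (by simp [h])
  have h2 : (1:F) - q ≠ 0 := sub_ne_zero.mpr (Ne.symm h1)
  have h3 : (1:F) - q ^ j ≠ 0 := sub_ne_zero.mpr (Ne.symm (hq j hj))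
  exact div_ne_zero h3 h2

lemma qFact_ne_zero (q : F) (hq : ∀ j : ℕ, 1 ≤ j → q ^ j ≠ 1) (m : ℕ) :
    qFact q m ≠ 0 :=
  Finset.prod_ne_zero_iff.mpr fun j hj => qNum_ne_zero q hq (Finset.mem_Icc.mp hj).1

lemma qFact_succ (q : F) (m : ℕ) : qFact q (m+1) = qFact q m * qNum q (m+1) := by
  unfold qFact
  rw [Finset.prod_Icc_succ_top (by omega)]

lemma qFact_zero (q : F) : qFact q 0 = 1 := by simp [qFact]

lemma qBinom_zero_right (q : F) (hq : ∀ j : ℕ, 1 ≤ j → q ^ j ≠ 1) (m : ℕ) :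
    qBinom q m 0 = 1 := by
  simp [qBinom, qFact_zero]
  exact qFact_ne_zero q hq m

lemma qBinom_self (q : F) (hq : ∀ j : ℕ, 1 ≤ j → q ^ j ≠ 1) (m : ℕ) : qBinom q m m = 1 := by
  simp [qBinom, qFact_zero]
  exact qFact_ne_zero q hq m

lemma qBinom_key (q : F) (hq : ∀ j : ℕ, 1 ≤ j → q ^ j ≠ 1) (n k : ℕ) (hk : k ≤ n) :
    (qBinom q (n+2) (k+1) : F) =
      qBinom q (n+1) (k+1) + qBinom q (n+1) k - (1 - q^(n+1)) * qBinom q n k := by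
  have h1 : q ≠ 1 := fun h => hq 1 le_rfl (by simp [h])
  have hq0 : (1:F) - q ≠ 0 := sub_ne_zero.mpr (Ne.symm h1)
  unfold qBinom
  rw [if_pos (by omega), if_pos (by omega), if_pos (by omega), if_pos (by omega)]
  have e1 : n + 2 - (k+1) = (n-k)+1 := by omega
  have e2 : n + 1 - (k+1) = n-k := by omega
  have e3 : n + 1 - k = (n-k)+1 := by omega
  rw [e1, e2, e3]
  rw [show n+2 = (n+1)+1 from rfl, qFact_succ, qFact_succ, qFact_succ, qFact_succ]
  have hFn := qFact_ne_zero q hq n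
  have hFk := qFact_ne_zero q hq k
  have hFnk := qFact_ne_zero q hq (n-k)
  have hu : (1:F) - q^(n+1) ≠ 0 := sub_ne_zero.mpr (Ne.symm (hq _ (by omega)))
  have hv : (1:F) - q^(n+1+1) ≠ 0 := sub_ne_zero.mpr (Ne.symm (hq _ (by omega)))
  have hw : (1:F) - q^(k+1) ≠ 0 := sub_ne_zero.mpr (Ne.symm (hq _ (by omega)))
  have hz : (1:F) - q^((n-k)+1) ≠ 0 := sub_ne_zero.mpr (Ne.symm (hq _ (by omega)))
  unfold qNum
  have hABD : q^(n+1+1) = q^(k+1) * q^((n-k)+1) := by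
    rw [← pow_add]
    congr 1
    omega
  generalize hA : q^(k+1) = A at hABD hw ⊢
  generalize hB : q^((n-k)+1) = B at hABD hz ⊢
  generalize hC : q^(n+1) = C at hu ⊢
  generalize hD : q^(n+1+1) = D at hABD hv ⊢
  generalize hFa : qFact q n = a at hFn ⊢
  generalize hFb : qFact q k = b at hFk ⊢
  generalize hFc : qFact q (n-k) = c at hFnk ⊢
  subst hABD
  have hb3 : b^3 * c^3 ≠ 0 := mul_ne_zero (pow_ne_zero _ hFk) (pow_ne_zero _ hFnk)
  have hDne : A * B * b ^ 3 * c ^ 3 + (-(A * b ^ 3 * c ^ 3) - B * b ^ 3 * c ^ 3) + b ^ 3 * c ^ 3 ≠ 0 := by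
    have h : A * B * b ^ 3 * c ^ 3 + (-(A * b ^ 3 * c ^ 3) - B * b ^ 3 * c ^ 3) + b ^ 3 * c ^ 3
        = (1 - A) * (1 - B) * (b ^ 3 * c ^ 3) := by ring
    rw [h]
    exact mul_ne_zero (mul_ne_zero hw hz) hb3
  field_simp
  ring

end Aux

noncomputable def qhSum (q θ : ℝ) (n : ℕ) : ℂ :=
  ∑ k ∈ Finset.range (n + 1),
    (qBinom q n k : ℂ) * Complex.exp (Complex.I * (((n : ℤ) - 2 * k : ℤ) : ℂ) * θ)

lemma qhSum_rec (q θ : ℝ) (hq : ∀ j : ℕ, 1 ≤ j → q ^ j ≠ 1) (n : ℕ) :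
    qhSum q θ (n+2) =
      (Complex.exp (Complex.I * (1:ℂ) * θ) + Complex.exp (Complex.I * (-1:ℂ) * θ)) *
        qhSum q θ (n+1) - (1 - (q:ℂ)^(n+1)) * qhSum q θ n := by
  set Em : ℤ → ℂ := fun z => Complex.exp (Complex.I * (z : ℂ) * θ) with hEm
  have emul : ∀ a b : ℤ, Em a * Em b = Em (a + b) := by
    intro a b
    simp only [hEm, ← Complex.exp_add]
    congr 1
    push_cast
    ring
  have hS : ∀ m : ℕ, qhSum q θ m =
      ∑ k ∈ Finset.range (m + 1), (qBinom q m k : ℂ) * Em ((m : ℤ) - 2 * k) := by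
    intro m; rfl
  rw [hS, hS, hS]
  rw [add_mul, Finset.mul_sum, Finset.mul_sum, Finset.mul_sum]
  have hEa : ∀ k : ℕ, Em 1 * Em (((n:ℤ)+1) - 2*k) = Em (((n:ℤ)+2) - 2*k) := by
    intro k; rw [emul]; ring_nf
  have hEb : ∀ k : ℕ, Em (-1) * Em (((n:ℤ)+1) - 2*k) = Em ((n:ℤ) - 2*k) := by
    intro k; rw [emul]; ring_nf
  simp only [Nat.cast_add, Nat.cast_one, Nat.cast_ofNat]
  have he1 : Complex.exp (Complex.I * (1:ℂ) * θ) = Em 1 := by simp [hEm]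
  have he2 : Complex.exp (Complex.I * (-1:ℂ) * θ) = Em (-1) := by
    simp only [hEm]; norm_num
  have A : ∑ k ∈ Finset.range (n+2),
      Complex.exp (Complex.I * (1:ℂ) * θ) * ((qBinom q (n+1) k : ℂ) * Em ((n:ℤ)+1 - 2*k)) =
      ∑ k ∈ Finset.range (n+2), (qBinom q (n+1) k : ℂ) * Em ((n:ℤ)+2 - 2*k) := by
    refine Finset.sum_congr rfl fun k _ => ?_
    rw [he1, mul_left_comm, hEa]
  have B : ∑ k ∈ Finset.range (n+2),
      Complex.exp (Complex.I * (-1:ℂ) * θ) * ((qBinom q (n+1) k : ℂ) * Em ((n:ℤ)+1 - 2*k)) =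
      ∑ k ∈ Finset.range (n+2), (qBinom q (n+1) k : ℂ) * Em ((n:ℤ) - 2*k) := by
    refine Finset.sum_congr rfl fun k _ => ?_
    rw [he2, mul_left_comm, hEb]
  rw [A, B]
  rw [Finset.sum_range_succ' (fun k => (qBinom q (n+2) k : ℂ) * Em ((n:ℤ)+2 - 2*k)) (n+2)]
  rw [Finset.sum_range_succ' (fun k => (qBinom q (n+1) k : ℂ) * Em ((n:ℤ)+2 - 2*k)) (n+1)]
  rw [Finset.sum_range_succ (fun k => (qBinom q (n+1) k : ℂ) * Em ((n:ℤ) - 2*k)) (n+1)]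
  have hClean : ∀ (m : ℕ) (f : ℕ → ℂ),
      ∑ k ∈ Finset.range m, f k * Em ((n:ℤ)+2 - 2*(k+1:ℕ)) =
      ∑ k ∈ Finset.range m, f k * Em ((n:ℤ) - 2*k) := by
    intro m f
    refine Finset.sum_congr rfl fun k _ => ?_
    congr 1
    push_cast
    ring
  have hqC : ∀ j : ℕ, 1 ≤ j → (q:ℂ) ^ j ≠ 1 := by
    intro j hj h
    exact hq j hj (by exact_mod_cast h)
  rw [hClean (n+2) (fun k => (qBinom (q:ℂ) (n+2) (k+1)))]
  rw [hClean (n+1) (fun k => (qBinom (q:ℂ) (n+1) (k+1)))]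
  rw [Finset.sum_range_succ (fun k => (qBinom (q:ℂ) (n+2) (k+1)) * Em ((n:ℤ) - 2*k)) (n+1)]
  have main : ∑ k ∈ Finset.range (n+1), (qBinom (q:ℂ) (n+2) (k+1)) * Em ((n:ℤ) - 2*k) =
      ∑ k ∈ Finset.range (n+1),
        ((qBinom (q:ℂ) (n+1) (k+1) + qBinom (q:ℂ) (n+1) k
          - (1 - (q:ℂ)^(n+1)) * qBinom (q:ℂ) n k)) * Em ((n:ℤ) - 2*k) := by
    refine Finset.sum_congr rfl fun k hk => ?_
    rw [qBinom_key (q:ℂ) hqC n k (Finset.mem_range_succ_iff.mp hk)]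
  rw [main]
  simp only [add_mul, sub_mul, Finset.sum_add_distrib, Finset.sum_sub_distrib,
    qBinom_zero_right (q:ℂ) hqC, qBinom_self (q:ℂ) hqC, one_mul, mul_assoc]
  ring

/-- `H_n(cos θ | q) = Σ_{k=0}^n [n choose k]_q e^{i(n-2k)θ}`. -/
theorem contQHermite_cos (q : ℝ) (hq : ∀ j : ℕ, 1 ≤ j → q ^ j ≠ 1)
    (n : ℕ) (θ : ℝ) :
    (contQHermite q n (Real.cos θ) : ℂ) =
      ∑ k ∈ Finset.range (n + 1),
        (qBinom q n k : ℂ) * Complex.exp (Complex.I * (((n : ℤ) - 2 * k : ℤ) : ℂ) * θ) := by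
  have hqC : ∀ j : ℕ, 1 ≤ j → (q:ℂ) ^ j ≠ 1 := by
    intro j hj h
    exact hq j hj (by exact_mod_cast h)
  have hgoal : ∀ m : ℕ, (contQHermite q m (Real.cos θ) : ℂ) = qhSum q θ m := by
    intro m
    induction m using Nat.twoStepInduction with
    | zero =>
        simp [contQHermite, qhSum, qBinom_zero_right (q:ℂ) hqC]
    | one =>
        show ((2 * Real.cos θ : ℝ) : ℂ) = _
        rw [show qhSum q θ 1 = ∑ k ∈ Finset.range 2,
          (qBinom (q:ℂ) 1 k) * Complex.exp (Complex.I * (((1 : ℤ) - 2 * k : ℤ) : ℂ) * θ) from rfl]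
        rw [Finset.sum_range_succ, Finset.sum_range_one]
        rw [qBinom_zero_right (q:ℂ) hqC, qBinom_self (q:ℂ) hqC]
        push_cast
        rw [Complex.cos]
        ring_nf
    | more m ih0 ih1 =>
        show ((2 * Real.cos θ * contQHermite q (m+1) (Real.cos θ)
            - (1 - q ^ (m + 1)) * contQHermite q m (Real.cos θ) : ℝ) : ℂ) = _
        rw [qhSum_rec q θ hq m]
        push_cast
        rw [ih0, ih1]
        have hc : (2 * Real.cos θ : ℂ) = Complex.exp (Complex.I * (1:ℂ) * θ)
            + Complex.exp (Complex.I * (-1:ℂ) * θ) := by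
          push_cast
          rw [Complex.cos]
          ring_nf
        push_cast at hc
        rw [← hc]
  exact hgoal n
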